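/- For every vector Y = (Y^1,…,Y^N) of random variables such that for each m the sum Σ_{k∈I_m} Y^k is P-a.s. equal to a real constant, Σ_{n=1}^N Y^n ≤ A P-a.s., and, for each n, Y^n ∈ L^1(Q̂^{m(n)}) and u_n(X^n+Y^n) is P-integrable, one has Σ_{n=1}^N E_P[u_n(X^n+Y^n)] ≤ Σ_{n=1}^N E_P[u_n(X^n+Ŷ^n)]. -/

import Mathlib

open MeasureTheory

theorem exp_tangent_aux {a b M : ℝ} (hM : Real.exp b * (b - a) = M) :
    1 - Real.exp a ≤ 1 - Real.exp b + M := by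
  have h := Real.add_one_le_exp (a - b)
  have h1 : Real.exp b * ((a - b) + 1) ≤ Real.exp b * Real.exp (a - b) :=
    mul_le_mul_of_nonneg_left h (Real.exp_pos b).le
  rw [← Real.exp_add] at h1
  have h2 : b + (a - b) = a := by ring
  rw [h2] at h1
  nlinarith [h1, hM]

set_option maxHeartbeats 2000000 in
/-- `Ŷ` attains the constrained systemic optimum `π(A)` over the clustering constraint
    set `B^(I)` in the exponential case (Theorem 5.5): any allocation `Y` whose cluster
    sums are a.s. constant, with `Σₙ Yⁿ ≤ A` a.s., `Yⁿ ∈ L¹(Q̂^{m(n)})` and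
    `uₙ(Xⁿ+Yⁿ)` integrable, has aggregate expected utility at most that of `Ŷ`. -/
theorem exponential_Yhat_optimal_constrained
    {Ω : Type*} [MeasurableSpace Ω] (P : Measure Ω) [IsProbabilityMeasure P]
    (N h : ℕ) (hN : 1 ≤ N) (A : ℝ)
    (α : Fin N → ℝ) (hα : ∀ n, 0 < α n)
    -- exponential utilities
    (u : Fin N → ℝ → ℝ) (hu : ∀ n x, u n x = 1 - Real.exp (-(α n * x)))
    -- the partition `(I_m)` of `{1,…,N}`: agent `n` belongs to group `p n`
    (p : Fin N → Fin h) (hp : Function.Surjective p)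
    (X : Fin N → Ω → ℝ) (hXmeas : ∀ n, Measurable (X n))
    (βm : Fin h → ℝ)
    (hβm : ∀ m, βm m = ∑ n ∈ Finset.univ.filter (fun n => p n = m), (α n)⁻¹)
    (β : ℝ) (hβ : β = ∑ n, (α n)⁻¹)
    (Xbar : Fin h → Ω → ℝ)
    (hXbar : ∀ m ω, Xbar m ω = ∑ n ∈ Finset.univ.filter (fun n => p n = m), X n ω)
    (ER : ℝ) (hER : ER = ∑ n, ((α n)⁻¹ / β) * Real.log (α n))
    -- `E_m := E_P[exp(−X̄_m/β_m)] < ∞`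
    (hEint : ∀ m, Integrable (fun ω => Real.exp (-(Xbar m ω / βm m))) P)
    (Em : Fin h → ℝ) (hEm : ∀ m, Em m = ∫ ω, Real.exp (-(Xbar m ω / βm m)) ∂P)
    (d : Fin h → ℝ)
    (hd : ∀ m, d m = (∑ j, (βm j / β) * Real.log (Em j)) - Real.log (Em m))
    -- the candidate equilibrium pricing measures
    (Qhat : Fin h → Measure Ω)
    (hQhat : ∀ m, Qhat m
      = P.withDensity (fun ω => ENNReal.ofReal (Real.exp (-(Xbar m ω / βm m)) / Em m)))
    -- the candidate optimal allocation
    (Yhat : Fin N → Ω → ℝ)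
    (hYhat : ∀ k ω, Yhat k ω
      = -X k ω + (α k)⁻¹ * (Xbar (p k) ω / βm (p k) - d (p k))
        + (α k)⁻¹ * (A / β + Real.log (α k) - ER))
    -- all exponential moments of the `Xⁿ` are finite
    (hXexp : ∀ n, ∀ a : ℝ, 0 < a → Integrable (fun ω => Real.exp (a * |X n ω|)) P) :
    ∀ Y : Fin N → Ω → ℝ,
      (∀ m : Fin h, ∃ c : ℝ, ∀ᵐ ω ∂P,
        ∑ k ∈ Finset.univ.filter (fun k => p k = m), Y k ω = c) →
      (∀ᵐ ω ∂P, ∑ n, Y n ω ≤ A) →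
      (∀ n, Integrable (Y n) (Qhat (p n))) →
      (∀ n, Integrable (fun ω => u n (X n ω + Y n ω)) P) →
      ∑ n, ∫ ω, u n (X n ω + Y n ω) ∂P ≤ ∑ n, ∫ ω, u n (X n ω + Yhat n ω) ∂P := by
  classical
  intro Y hYc hYA hYQ hYint
  choose cY hcY using hYc
  haveI : Nonempty (Fin N) := Fin.pos_iff_nonempty.mp hN
  haveI : NeZero P := ⟨IsProbabilityMeasure.ne_zero P⟩
  -- basic positivity facts
  have hβpos : 0 < β := by
    rw [hβ]
    exact Finset.sum_pos (fun n _ => inv_pos.2 (hα n)) Finset.univ_nonempty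
  have hβmpos : ∀ m, 0 < βm m := by
    intro m
    obtain ⟨n, hn⟩ := hp m
    rw [hβm]
    exact Finset.sum_pos (fun k _ => inv_pos.2 (hα k))
      ⟨n, Finset.mem_filter.2 ⟨Finset.mem_univ n, hn⟩⟩
  have hXbarmeas : ∀ m, Measurable (Xbar m) := by
    intro m
    have : Xbar m = fun ω => ∑ n ∈ Finset.univ.filter (fun n => p n = m), X n ω :=
      funext (hXbar m)
    rw [this]
    exact Finset.measurable_sum _ fun n _ => hXmeas n
  have hEmpos : ∀ m, 0 < Em m := by
    intro m
    rw [hEm]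
    exact integral_exp_pos (hEint m)
  -- the dominating function T
  set T : Ω → ℝ := fun ω => ∑ j, |X j ω| with hT
  have hTmeas : Measurable T := Finset.measurable_sum _ fun j _ => (hXmeas j).abs
  have hT0 : ∀ ω, 0 ≤ T ω := fun ω => Finset.sum_nonneg fun j _ => abs_nonneg _
  have hXT : ∀ n ω, |X n ω| ≤ T ω := fun n ω =>
    Finset.single_le_sum (f := fun j => |X j ω|) (fun j _ => abs_nonneg _) (Finset.mem_univ n)
  have hXbarT : ∀ m ω, |Xbar m ω| ≤ T ω := by
    intro m ω
    rw [hXbar]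
    refine (Finset.abs_sum_le_sum_abs _ _).trans ?_
    exact Finset.sum_le_sum_of_subset_of_nonneg (Finset.filter_subset _ _)
      (fun j _ _ => abs_nonneg _)
  have hTint : ∀ b : ℝ, 0 < b → Integrable (fun ω => Real.exp (b * T ω)) P := by
    intro b hb
    have hbN : 0 < (N : ℝ) * b := by positivity
    refine Integrable.mono'
      (integrable_finset_sum Finset.univ fun j _ => hXexp j ((N : ℝ) * b) hbN)
      ((hTmeas.const_mul b).exp.aestronglyMeasurable)
      (Filter.Eventually.of_forall fun ω => ?_)
    rw [Real.norm_eq_abs, abs_of_nonneg (Real.exp_pos _).le]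
    obtain ⟨i, _, hi⟩ := Finset.exists_max_image Finset.univ (fun j => |X j ω|)
      Finset.univ_nonempty
    calc Real.exp (b * T ω) ≤ Real.exp ((N : ℝ) * b * |X i ω|) := by
          apply Real.exp_le_exp.2
          have hsum : T ω ≤ (N : ℝ) * |X i ω| := by
            have := Finset.sum_le_card_nsmul Finset.univ (fun j => |X j ω|) (|X i ω|)
              (fun j _ => hi j (Finset.mem_univ j))
            simpa [hT, nsmul_eq_mul] using this
          nlinarith
      _ ≤ ∑ j, Real.exp ((N : ℝ) * b * |X j ω|) :=
          Finset.single_le_sum (f := fun j => Real.exp ((N : ℝ) * b * |X j ω|))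
            (fun j _ => (Real.exp_pos _).le) (Finset.mem_univ i)
  have hIntBound : ∀ (F : Ω → ℝ) (b C : ℝ), 0 < b → AEStronglyMeasurable F P →
      (∀ ω, |F ω| ≤ C * Real.exp (b * T ω)) → Integrable F P := by
    intro F b C hb hF hle
    exact Integrable.mono' ((hTint b hb).const_mul C) hF
      (Filter.Eventually.of_forall fun ω => by simpa [Real.norm_eq_abs] using hle ω)
  -- bound on the density exponential
  have hgT : ∀ m ω, Real.exp (-(Xbar m ω / βm m)) ≤ Real.exp ((βm m)⁻¹ * T ω) := by
    intro m ω
    apply Real.exp_le_exp.2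
    have h1 : -Xbar m ω ≤ T ω := (neg_le_abs _).trans (hXbarT m ω)
    have h2 : (0:ℝ) ≤ (βm m)⁻¹ := (inv_pos.2 (hβmpos m)).le
    calc -(Xbar m ω / βm m) = -Xbar m ω * (βm m)⁻¹ := by ring
      _ ≤ T ω * (βm m)⁻¹ := mul_le_mul_of_nonneg_right h1 h2
      _ = (βm m)⁻¹ * T ω := mul_comm _ _
  -- integrability of density times (at most linearly in T) functions
  have hgX : ∀ (m : Fin h) (φ : Ω → ℝ) (C1 C2 : ℝ), 0 ≤ C1 → 0 ≤ C2 →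
      AEStronglyMeasurable φ P → (∀ ω, |φ ω| ≤ C1 + C2 * T ω) →
      Integrable (fun ω => Real.exp (-(Xbar m ω / βm m)) * φ ω) P := by
    intro m φ C1 C2 hC1 hC2 hφ hbnd
    refine hIntBound _ ((βm m)⁻¹ + 1) (C1 + C2) (by have := hβmpos m; positivity)
      (((hXbarmeas m).div_const _).neg.exp.aestronglyMeasurable.mul hφ) (fun ω => ?_)
    have e0 : |Real.exp (-(Xbar m ω / βm m)) * φ ω|
        = Real.exp (-(Xbar m ω / βm m)) * |φ ω| := by
      rw [abs_mul, abs_of_nonneg (Real.exp_pos _).le]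
    have e1 : Real.exp (-(Xbar m ω / βm m)) * |φ ω|
        ≤ Real.exp ((βm m)⁻¹ * T ω) * (C1 + C2 * T ω) :=
      mul_le_mul (hgT m ω) (hbnd ω) (abs_nonneg _) (Real.exp_pos _).le
    have hT1 : T ω ≤ Real.exp (T ω) := by
      have := Real.add_one_le_exp (T ω); linarith
    have h3 : Real.exp ((βm m)⁻¹ * T ω) ≤ Real.exp (((βm m)⁻¹ + 1) * T ω) :=
      Real.exp_le_exp.2 (by nlinarith [hT0 ω])
    have h4 : Real.exp ((βm m)⁻¹ * T ω) * T ω ≤ Real.exp (((βm m)⁻¹ + 1) * T ω) := by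
      calc Real.exp ((βm m)⁻¹ * T ω) * T ω
          ≤ Real.exp ((βm m)⁻¹ * T ω) * Real.exp (T ω) :=
            mul_le_mul_of_nonneg_left hT1 (Real.exp_pos _).le
        _ = Real.exp (((βm m)⁻¹ + 1) * T ω) := by rw [← Real.exp_add]; ring_nf
    rw [e0]
    nlinarith [Real.exp_pos ((βm m)⁻¹ * T ω)]
  -- key exponential identity for Yhat
  have hf : ∀ (n : Fin N) (ω : Ω),
      Real.exp (-(α n * (X n ω + Yhat n ω)))
        = Real.exp (ER - A / β) * Real.exp (d (p n)) * (α n)⁻¹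
            * Real.exp (-(Xbar (p n) ω / βm (p n))) := by
    intro n ω
    have key : -(α n * (X n ω + Yhat n ω))
        = (ER - A / β) + d (p n) + (-Real.log (α n)) + (-(Xbar (p n) ω / βm (p n))) := by
      rw [hYhat]
      field_simp [(hα n).ne', (hβmpos (p n)).ne', hβpos.ne']
      ring
    rw [key, Real.exp_add, Real.exp_add, Real.exp_add, Real.exp_neg, Real.exp_log (hα n)]
  -- measurability and bound for Yhat
  have hYhatmeas : ∀ n, Measurable (Yhat n) := by
    intro n
    have : Yhat n = fun ω => -X n ω + (α n)⁻¹ * (Xbar (p n) ω / βm (p n) - d (p n))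
        + (α n)⁻¹ * (A / β + Real.log (α n) - ER) := funext (hYhat n)
    rw [this]
    apply Measurable.add
    apply Measurable.add (hXmeas n).neg
    · exact (((hXbarmeas (p n)).div_const _).sub_const _).const_mul _
    · exact measurable_const
  have hYhatbnd : ∀ n, ∃ C1 C2 : ℝ, 0 ≤ C1 ∧ 0 ≤ C2 ∧ ∀ ω, |Yhat n ω| ≤ C1 + C2 * T ω := by
    intro n
    refine ⟨(α n)⁻¹ * |d (p n)| + (α n)⁻¹ * |A / β + Real.log (α n) - ER|,
      1 + (α n)⁻¹ * (βm (p n))⁻¹, by have := hα n; positivity,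
      by have h1 := hα n; have h2 := hβmpos (p n); positivity, fun ω => ?_⟩
    rw [hYhat]
    have ha : (0:ℝ) < (α n)⁻¹ := inv_pos.2 (hα n)
    have hbinv : (0:ℝ) < (βm (p n))⁻¹ := inv_pos.2 (hβmpos (p n))
    have hx1 : -T ω ≤ X n ω := neg_le_of_abs_le (hXT n ω)
    have hx2 : X n ω ≤ T ω := le_of_abs_le (hXT n ω)
    have hz1 : -T ω ≤ Xbar (p n) ω := neg_le_of_abs_le (hXbarT (p n) ω)
    have hz2 : Xbar (p n) ω ≤ T ω := le_of_abs_le (hXbarT (p n) ω)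
    have hd1 : -|d (p n)| ≤ d (p n) := neg_abs_le _
    have hd2 : d (p n) ≤ |d (p n)| := le_abs_self _
    have hk1 : -|A / β + Real.log (α n) - ER| ≤ A / β + Real.log (α n) - ER := neg_abs_le _
    have hk2 : A / β + Real.log (α n) - ER ≤ |A / β + Real.log (α n) - ER| := le_abs_self _
    rw [abs_le]
    have hz3 : Xbar (p n) ω / βm (p n) ≤ T ω / βm (p n) :=
      div_le_div_of_nonneg_right hz2 (hβmpos (p n)).le
    have hz4 : -T ω / βm (p n) ≤ Xbar (p n) ω / βm (p n) :=
      div_le_div_of_nonneg_right hz1 (hβmpos (p n)).le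
    have hz5 : -T ω / βm (p n) = -(T ω * (βm (p n))⁻¹) := by ring
    have hz6 : T ω / βm (p n) = T ω * (βm (p n))⁻¹ := by ring
    rw [hz5] at hz4
    rw [hz6] at hz3
    have hm1 : (α n)⁻¹ * (Xbar (p n) ω / βm (p n) - d (p n))
        ≤ (α n)⁻¹ * (T ω * (βm (p n))⁻¹ + |d (p n)|) :=
      mul_le_mul_of_nonneg_left (by linarith) ha.le
    have hm2 : (α n)⁻¹ * (-(T ω * (βm (p n))⁻¹ + |d (p n)|))
        ≤ (α n)⁻¹ * (Xbar (p n) ω / βm (p n) - d (p n)) :=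
      mul_le_mul_of_nonneg_left (by linarith) ha.le
    have hk3 : (α n)⁻¹ * (A / β + Real.log (α n) - ER)
        ≤ (α n)⁻¹ * |A / β + Real.log (α n) - ER| :=
      mul_le_mul_of_nonneg_left hk2 ha.le
    have hk4 : (α n)⁻¹ * (-|A / β + Real.log (α n) - ER|)
        ≤ (α n)⁻¹ * (A / β + Real.log (α n) - ER) :=
      mul_le_mul_of_nonneg_left hk1 ha.le
    constructor
    · nlinarith
    · nlinarith
  -- integrability of density * Y (from the Qhat-integrability hypothesis)
  have hI2 : ∀ n, Integrable (fun ω => Real.exp (-(Xbar (p n) ω / βm (p n))) * Y n ω) P := by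
    intro n
    have h0 := hYQ n
    rw [hQhat] at h0
    rw [integrable_withDensity_iff
      (f := fun ω => ENNReal.ofReal (Real.exp (-(Xbar (p n) ω / βm (p n))) / Em (p n)))
      ((((hXbarmeas (p n)).div_const _).neg.exp.div_const _).ennreal_ofReal)
      (Filter.Eventually.of_forall fun ω => ENNReal.ofReal_lt_top)] at h0
    have h1 : (fun ω => Y n ω
        * (ENNReal.ofReal (Real.exp (-(Xbar (p n) ω / βm (p n))) / Em (p n))).toReal)
        = fun ω => Y n ω * (Real.exp (-(Xbar (p n) ω / βm (p n))) / Em (p n)) := by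
      funext ω
      rw [ENNReal.toReal_ofReal (by have := hEmpos (p n); positivity)]
    rw [h1] at h0
    have h2 := h0.const_mul (Em (p n))
    refine h2.congr (Filter.Eventually.of_forall fun ω => ?_)
    have : Em (p n) ≠ 0 := (hEmpos (p n)).ne'
    field_simp
  -- integrability of density * Yhat
  have hI3 : ∀ n, Integrable (fun ω => Real.exp (-(Xbar (p n) ω / βm (p n))) * Yhat n ω) P := by
    intro n
    obtain ⟨C1, C2, hC1, hC2, hbnd⟩ := hYhatbnd n
    exact hgX (p n) (Yhat n) C1 C2 hC1 hC2 (hYhatmeas n).aestronglyMeasurable hbnd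
  have hI23 : ∀ n, Integrable
      (fun ω => Real.exp (-(Xbar (p n) ω / βm (p n))) * (Y n ω - Yhat n ω)) P := by
    intro n
    have := (hI2 n).sub (hI3 n)
    refine this.congr (Filter.Eventually.of_forall fun ω => ?_)
    simp only [Pi.sub_apply]
    ring
  -- integrability of u ∘ (X + Yhat)
  have hI1 : ∀ n, Integrable (fun ω => u n (X n ω + Yhat n ω)) P := by
    intro n
    simp only [hu]
    apply Integrable.sub (integrable_const 1)
    have : (fun ω => Real.exp (-(α n * (X n ω + Yhat n ω))))
        = fun ω => (Real.exp (ER - A / β) * Real.exp (d (p n)) * (α n)⁻¹)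
            * Real.exp (-(Xbar (p n) ω / βm (p n))) := by
      funext ω; rw [hf n ω]
    rw [this]
    exact (hEint (p n)).const_mul _
  -- the key per-agent inequality
  have key : ∀ n, ∫ ω, u n (X n ω + Y n ω) ∂P
      ≤ (∫ ω, u n (X n ω + Yhat n ω) ∂P)
        + (Real.exp (ER - A / β) * Real.exp (d (p n)))
          * ∫ ω, Real.exp (-(Xbar (p n) ω / βm (p n))) * (Y n ω - Yhat n ω) ∂P := by
    intro n
    have hpt : ∀ ω, u n (X n ω + Y n ω)
        ≤ u n (X n ω + Yhat n ω)
          + (Real.exp (ER - A / β) * Real.exp (d (p n)))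
            * (Real.exp (-(Xbar (p n) ω / βm (p n))) * (Y n ω - Yhat n ω)) := by
      intro ω
      rw [hu, hu]
      refine exp_tangent_aux ?_
      rw [hf n ω]
      have hcancel : (α n)⁻¹ * α n = 1 := inv_mul_cancel₀ (hα n).ne'
      calc Real.exp (ER - A / β) * Real.exp (d (p n)) * (α n)⁻¹
            * Real.exp (-(Xbar (p n) ω / βm (p n)))
            * (-(α n * (X n ω + Yhat n ω)) - -(α n * (X n ω + Y n ω)))
          = ((α n)⁻¹ * α n) * (Real.exp (ER - A / β) * Real.exp (d (p n))
              * (Real.exp (-(Xbar (p n) ω / βm (p n))) * (Y n ω - Yhat n ω))) := by ring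
        _ = Real.exp (ER - A / β) * Real.exp (d (p n))
              * (Real.exp (-(Xbar (p n) ω / βm (p n))) * (Y n ω - Yhat n ω)) := by
            rw [hcancel, one_mul]
    have hRHS : Integrable (fun ω => u n (X n ω + Yhat n ω)
        + (Real.exp (ER - A / β) * Real.exp (d (p n)))
          * (Real.exp (-(Xbar (p n) ω / βm (p n))) * (Y n ω - Yhat n ω))) P :=
      (hI1 n).add ((hI23 n).const_mul _)
    calc ∫ ω, u n (X n ω + Y n ω) ∂P
        ≤ ∫ ω, (u n (X n ω + Yhat n ω)
            + (Real.exp (ER - A / β) * Real.exp (d (p n)))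
              * (Real.exp (-(Xbar (p n) ω / βm (p n))) * (Y n ω - Yhat n ω))) ∂P :=
          integral_mono (hYint n) hRHS hpt
      _ = _ := by
          rw [integral_add (hI1 n) ((hI23 n).const_mul _), integral_const_mul]
  -- the sum of Yhat over a cluster is a pointwise constant
  set chat : Fin h → ℝ := fun m =>
    -(βm m * d m) + βm m * (A / β)
      + (∑ k ∈ Finset.univ.filter (fun k => p k = m), (α k)⁻¹ * Real.log (α k))
      - βm m * ER with hchat
  have hShat : ∀ m ω, ∑ k ∈ Finset.univ.filter (fun k => p k = m), Yhat k ω = chat m := by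
    intro m ω
    have hterm : ∀ k ∈ Finset.univ.filter (fun k => p k = m),
        Yhat k ω = -X k ω + ((α k)⁻¹ * (Xbar m ω / βm m - d m) + (α k)⁻¹ * (A / β))
          + ((α k)⁻¹ * Real.log (α k) - (α k)⁻¹ * ER) := by
      intro k hk
      have hpk : p k = m := (Finset.mem_filter.1 hk).2
      rw [hYhat, hpk]
      ring
    rw [Finset.sum_congr rfl hterm]
    simp only [Finset.sum_add_distrib, Finset.sum_sub_distrib, Finset.sum_neg_distrib,
      ← Finset.sum_mul]
    rw [← hβm, ← hXbar, hchat]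
    have hb0 : βm m ≠ 0 := (hβmpos m).ne'
    field_simp
    ring
  -- sum of cluster constants for Yhat equals A
  have hβmsum : ∑ m, βm m = β := by
    calc ∑ m, βm m = ∑ m, ∑ k ∈ Finset.univ.filter (fun k => p k = m), (α k)⁻¹ :=
          Finset.sum_congr rfl fun m _ => hβm m
      _ = ∑ n, (α n)⁻¹ :=
          Finset.sum_fiberwise_of_maps_to (fun n _ => Finset.mem_univ (p n)) _
      _ = β := hβ.symm
  have hLsum : ∑ m, ∑ k ∈ Finset.univ.filter (fun k => p k = m),
      (α k)⁻¹ * Real.log (α k) = β * ER := by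
    rw [Finset.sum_fiberwise_of_maps_to (fun n _ => Finset.mem_univ (p n)) _, hER,
      Finset.mul_sum]
    refine Finset.sum_congr rfl fun n _ => ?_
    field_simp
  have hdsum : ∑ m, βm m * d m = 0 := by
    have e1 : ∀ m : Fin h, βm m * d m
        = βm m * (∑ j, (βm j / β) * Real.log (Em j)) - βm m * Real.log (Em m) :=
      fun m => by rw [hd]; ring
    rw [Finset.sum_congr rfl fun m _ => e1 m, Finset.sum_sub_distrib, ← Finset.sum_mul,
      hβmsum, Finset.mul_sum, sub_eq_zero]
    refine Finset.sum_congr rfl fun m _ => ?_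
    field_simp
  have hchatsum : ∑ m, chat m = A := by
    rw [hchat]
    simp only [Finset.sum_sub_distrib, Finset.sum_add_distrib, Finset.sum_neg_distrib,
      ← Finset.sum_mul]
    rw [hdsum, hβmsum, hLsum]
    field_simp
    ring
  -- exp(d m) * Em m is independent of m
  set K : ℝ := Real.exp (∑ j, (βm j / β) * Real.log (Em j)) with hK
  have hdK : ∀ m, Real.exp (d m) * Em m = K := by
    intro m
    rw [hd, Real.exp_sub, Real.exp_log (hEmpos m), hK]
    exact div_mul_cancel₀ _ (hEmpos m).ne'
  -- the integral over each cluster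
  have hcluster : ∀ m,
      ∑ n ∈ Finset.univ.filter (fun n => p n = m),
        ∫ ω, Real.exp (-(Xbar m ω / βm m)) * (Y n ω - Yhat n ω) ∂P
      = Em m * (cY m - chat m) := by
    intro m
    have hint : ∀ n ∈ Finset.univ.filter (fun n => p n = m),
        Integrable (fun ω => Real.exp (-(Xbar m ω / βm m)) * (Y n ω - Yhat n ω)) P := by
      intro n hn
      have hpn : p n = m := (Finset.mem_filter.1 hn).2
      have := hI23 n
      rwa [hpn] at this
    rw [← integral_finset_sum _ hint]
    have hae : ∀ᵐ ω ∂P, ∑ n ∈ Finset.univ.filter (fun n => p n = m),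
        Real.exp (-(Xbar m ω / βm m)) * (Y n ω - Yhat n ω)
        = Real.exp (-(Xbar m ω / βm m)) * (cY m - chat m) := by
      filter_upwards [hcY m] with ω hω
      rw [← Finset.mul_sum, Finset.sum_sub_distrib, hω, hShat m ω]
    rw [integral_congr_ae hae, integral_mul_const, ← hEm, mul_comm]
  -- sum of the cY's is at most A
  have hcYsum : ∑ m, cY m ≤ A := by
    haveI : (ae P).NeBot := ae_neBot.2 (NeZero.ne P)
    have hae : ∀ᵐ ω ∂P, (∀ m, ∑ k ∈ Finset.univ.filter (fun k => p k = m), Y k ω = cY m)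
        ∧ ∑ n, Y n ω ≤ A := (ae_all_iff.2 hcY).and hYA
    obtain ⟨ω, hω1, hω2⟩ := hae.exists
    have : ∑ m, cY m = ∑ n, Y n ω := by
      rw [← Finset.sum_fiberwise_of_maps_to (fun n _ => Finset.mem_univ (p n)) (fun n => Y n ω)]
      exact Finset.sum_congr rfl fun m _ => (hω1 m).symm
    linarith
  -- assemble
  have hsum2 : ∑ n, (Real.exp (ER - A / β) * Real.exp (d (p n)))
      * ∫ ω, Real.exp (-(Xbar (p n) ω / βm (p n))) * (Y n ω - Yhat n ω) ∂P
      = Real.exp (ER - A / β) * K * (∑ m, cY m - A) := by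
    calc ∑ n, (Real.exp (ER - A / β) * Real.exp (d (p n)))
          * ∫ ω, Real.exp (-(Xbar (p n) ω / βm (p n))) * (Y n ω - Yhat n ω) ∂P
        = ∑ m, ∑ n ∈ Finset.univ.filter (fun n => p n = m),
            (Real.exp (ER - A / β) * Real.exp (d (p n)))
              * ∫ ω, Real.exp (-(Xbar (p n) ω / βm (p n))) * (Y n ω - Yhat n ω) ∂P :=
          (Finset.sum_fiberwise_of_maps_to (fun n _ => Finset.mem_univ (p n)) _).symm
      _ = ∑ m, ∑ n ∈ Finset.univ.filter (fun n => p n = m),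
            (Real.exp (ER - A / β) * Real.exp (d m))
              * ∫ ω, Real.exp (-(Xbar m ω / βm m)) * (Y n ω - Yhat n ω) ∂P := by
          refine Finset.sum_congr rfl fun m _ => Finset.sum_congr rfl fun n hn => ?_
          rw [(Finset.mem_filter.1 hn).2]
      _ = ∑ m, (Real.exp (ER - A / β) * Real.exp (d m)) * (Em m * (cY m - chat m)) := by
          refine Finset.sum_congr rfl fun m _ => ?_
          rw [← Finset.mul_sum, hcluster m]
      _ = ∑ m, (Real.exp (ER - A / β) * K) * (cY m - chat m) := by
          refine Finset.sum_congr rfl fun m _ => ?_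
          rw [← hdK m]
          ring
      _ = Real.exp (ER - A / β) * K * (∑ m, (cY m - chat m)) := by rw [← Finset.mul_sum]
      _ = Real.exp (ER - A / β) * K * (∑ m, cY m - A) := by
          rw [Finset.sum_sub_distrib, hchatsum]
  have hKpos : 0 < K := Real.exp_pos _
  calc ∑ n, ∫ ω, u n (X n ω + Y n ω) ∂P
      ≤ ∑ n, ((∫ ω, u n (X n ω + Yhat n ω) ∂P)
        + (Real.exp (ER - A / β) * Real.exp (d (p n)))
          * ∫ ω, Real.exp (-(Xbar (p n) ω / βm (p n))) * (Y n ω - Yhat n ω) ∂P) :=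
        Finset.sum_le_sum fun n _ => key n
    _ = (∑ n, ∫ ω, u n (X n ω + Yhat n ω) ∂P)
        + ∑ n, (Real.exp (ER - A / β) * Real.exp (d (p n)))
          * ∫ ω, Real.exp (-(Xbar (p n) ω / βm (p n))) * (Y n ω - Yhat n ω) ∂P :=
        Finset.sum_add_distrib
    _ ≤ ∑ n, ∫ ω, u n (X n ω + Yhat n ω) ∂P := by
        rw [hsum2]
        have h0 : 0 ≤ Real.exp (ER - A / β) * K * (A - ∑ m, cY m) :=
          mul_nonneg (mul_nonneg (Real.exp_pos _).le hKpos.le) (by linarith)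
        nlinarith [h0]
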